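/- (High-SNR training objective bound) Let A be an N × N complex Hermitian positive definite matrix with eigenvalues λ_1 ≥ ⋯ ≥ λ_N > 0 and unitary eigenvector matrix U. Then for every X ∈ ℂ^{N × T} with X^H X = ρ I_T (ρ > 0, T ≤ N), the matrix X^H A X is positive definite and tr( (X^H A X)^{-1} X^H A² X ) ≤ Σ_{t=1}^{T} λ_t, with equality for X = √ρ · U_{[1:T]}. -/

import Mathlib

open Matrix BigOperators
open scoped ComplexOrder


lemma aux_sum_beta {N T : ℕ} (hTN : T ≤ N) (f : Fin N → ℝ) :
    ∑ i : Fin N, (if (i : ℕ) < T then f i else 0) = ∑ t : Fin T, f (Fin.castLE hTN t) := by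
  classical
  rw [← Finset.sum_filter]
  have himg : (Finset.univ.image (Fin.castLE hTN)) =
      Finset.univ.filter (fun i : Fin N => (i : ℕ) < T) := by
    ext i
    simp only [Finset.mem_image, Finset.mem_univ, true_and, Finset.mem_filter]
    constructor
    · rintro ⟨a, rfl⟩; exact a.2
    · intro h; exact ⟨⟨i, h⟩, by ext; rfl⟩
  rw [← himg, Finset.sum_image (fun a _ b _ h => Fin.castLE_injective hTN h)]

lemma aux_comb {N T : ℕ} (hT : 0 < T) (hTN : T ≤ N) (lam : Fin N → ℝ) (hmono : Antitone lam)
    (α : Fin N → ℝ) (h0 : ∀ i, 0 ≤ α i) (h1 : ∀ i, α i ≤ 1) (hsum : ∑ i, α i = (T : ℝ)) :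
    ∑ i, lam i * α i ≤ ∑ t : Fin T, lam (Fin.castLE hTN t) := by
  classical
  set β : Fin N → ℝ := fun i => if (i : ℕ) < T then 1 else 0 with hβ
  have hlamβ : ∑ i, lam i * β i = ∑ t : Fin T, lam (Fin.castLE hTN t) := by
    rw [← aux_sum_beta hTN lam]
    exact Finset.sum_congr rfl (fun i _ => by by_cases h : (i : ℕ) < T <;> simp [hβ, h])
  have hsumβ : ∑ i, β i = (T : ℝ) := by
    have := aux_sum_beta hTN (fun _ => (1 : ℝ))
    simp only [hβ]
    rw [this]
    simp
  set c : ℝ := lam ⟨T - 1, lt_of_lt_of_le (Nat.sub_lt hT one_pos) hTN⟩ with hc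
  have key : ∀ i : Fin N, lam i * α i - lam i * β i ≤ c * (α i - β i) := by
    intro i
    by_cases h : (i : ℕ) < T
    · have hci : c ≤ lam i := hmono (by simpa [Fin.le_def] using Nat.le_sub_one_of_lt h)
      have : α i - 1 ≤ 0 := by linarith [h1 i]
      have := mul_le_mul_of_nonpos_right hci this
      simp only [hβ, if_pos h]
      nlinarith
    · have hci : lam i ≤ c := hmono (by simp [Fin.le_def]; omega)
      simp only [hβ, if_neg h]
      nlinarith [h0 i, mul_le_mul_of_nonneg_right hci (h0 i)]
  have : ∑ i, (lam i * α i - lam i * β i) ≤ ∑ i, c * (α i - β i) :=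
    Finset.sum_le_sum (fun i _ => key i)
  rw [Finset.sum_sub_distrib, ← Finset.mul_sum, Finset.sum_sub_distrib, hsum, hsumβ] at this
  simp at this
  linarith [hlamβ ▸ this]



lemma aux_posdef_conj {n m : Type*} [Fintype n] [Fintype m] [DecidableEq n] [DecidableEq m]
    {A : Matrix n n ℂ} (hA : A.PosDef) (B : Matrix n m ℂ)
    (hB : ∀ x : m → ℂ, B *ᵥ x = 0 → x = 0) : (Bᴴ * A * B).PosDef := by
  refine posDef_iff_dotProduct_mulVec.mpr ⟨isHermitian_conjTranspose_mul_mul B hA.1, fun x hx => ?_⟩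
  have hBx : B *ᵥ x ≠ 0 := fun h => hx (hB x h)
  simpa only [star_mulVec, dotProduct_mulVec, vecMul_vecMul] using (posDef_iff_dotProduct_mulVec.mp hA).2 hBx

lemma aux_proj_diag {n : Type*} [Fintype n] [DecidableEq n]
    {Q : Matrix n n ℂ} (hQH : Qᴴ = Q) (hQQ : Q * Q = Q) (i : n) :
    0 ≤ (Q i i).re ∧ (Q i i).re ≤ 1 ∧ (Q i i).im = 0 := by
  have hdiag : Q i i = ((∑ j, Complex.normSq (Q i j) : ℝ) : ℂ) := by
    conv_lhs => rw [← hQQ]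
    rw [Matrix.mul_apply]
    push_cast
    refine Finset.sum_congr rfl (fun j _ => ?_)
    have : Q j i = star (Q i j) := by
      have := congrArg (fun M : Matrix n n ℂ => M j i) hQH
      simpa [Matrix.conjTranspose_apply] using this.symm
    rw [this, Complex.star_def, Complex.mul_conj]
  have him : (Q i i).im = 0 := by rw [hdiag]; simp
  have hre : (Q i i).re = ∑ j, Complex.normSq (Q i j) := by rw [hdiag]; simp
  have h0 : 0 ≤ (Q i i).re := by
    rw [hre]; exact Finset.sum_nonneg (fun j _ => Complex.normSq_nonneg _)
  have hge : Complex.normSq (Q i i) ≤ (Q i i).re := by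
    rw [hre]
    exact Finset.single_le_sum (fun j _ => Complex.normSq_nonneg _) (Finset.mem_univ i)
  have hsq : (Q i i).re ^ 2 ≤ (Q i i).re := by
    have : Complex.normSq (Q i i) = (Q i i).re ^ 2 + (Q i i).im ^ 2 := by
      rw [Complex.normSq_apply]; ring
    rw [this, him] at hge; linarith
  exact ⟨h0, by nlinarith, him⟩


theorem aux_ineq (N T : ℕ) (hT : 0 < T) (hTN : T ≤ N)
    (ρ : ℝ) (hρ : 0 < ρ)
    (U : Matrix (Fin N) (Fin N) ℂ) (hU1 : Uᴴ * U = 1) (hU2 : U * Uᴴ = 1)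
    (lam : Fin N → ℝ) (hpos : ∀ t, 0 < lam t) (hmono : Antitone lam)
    (A : Matrix (Fin N) (Fin N) ℂ)
    (hA : A = U * Matrix.diagonal (fun t => (lam t : ℂ)) * Uᴴ)
    (X : Matrix (Fin N) (Fin T) ℂ)
    (hX : Xᴴ * X = (ρ : ℂ) • (1 : Matrix (Fin T) (Fin T) ℂ)) :
    (Xᴴ * A * X).PosDef
    ∧ ((Xᴴ * A * X)⁻¹ * (Xᴴ * (A * A) * X)).trace.re
        ≤ ∑ t : Fin T, lam (Fin.castLE hTN t) := by
  classical
  set D : Matrix (Fin N) (Fin N) ℂ := Matrix.diagonal (fun t => (lam t : ℂ)) with hD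
  -- A is positive definite
  have hDpd : D.PosDef := Matrix.posDef_diagonal_iff.mpr
    (fun i => Complex.zero_lt_real.mpr (hpos i))
  have hApd : A.PosDef := by
    have hinj : ∀ x : Fin N → ℂ, Uᴴ *ᵥ x = 0 → x = 0 := by
      intro x hx
      have := congrArg (fun v => U *ᵥ v) hx
      simpa [Matrix.mulVec_mulVec, hU2] using this
    have := aux_posdef_conj hDpd Uᴴ hinj
    rw [hA]
    simpa using this
  -- X has trivial kernel
  have hXinj : ∀ x : Fin T → ℂ, X *ᵥ x = 0 → x = 0 := by
    intro x hx
    have := congrArg (fun v => Xᴴ *ᵥ v) hx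
    simp only [Matrix.mulVec_mulVec, hX, Matrix.mulVec_zero] at this
    rw [Matrix.smul_mulVec, Matrix.one_mulVec] at this
    have hρne : (ρ : ℂ) ≠ 0 := by exact_mod_cast (Complex.ofReal_ne_zero.mpr hρ.ne')
    exact (smul_eq_zero.mp this).resolve_left hρne
  have hBpd : (Xᴴ * A * X).PosDef := aux_posdef_conj hApd X hXinj
  refine ⟨hBpd, ?_⟩
  set B : Matrix (Fin T) (Fin T) ℂ := Xᴴ * A * X with hBdef
  have hBdet : IsUnit B.det := hBpd.det_pos.ne'.isUnit
  -- square root of A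
  have hApsd : A.PosSemidef := hApd.posSemidef
  obtain ⟨S, hSS, hSh⟩ : ∃ S : Matrix (Fin N) (Fin N) ℂ, S * S = A ∧ Sᴴ = S := by
    open scoped MatrixOrder in
    exact ⟨CFC.sqrt A, CFC.sqrt_mul_sqrt_self A hApsd.nonneg,
      (CFC.sqrt_nonneg A).posSemidef.isHermitian.eq⟩
  set Y : Matrix (Fin N) (Fin T) ℂ := S * X with hYdef
  have hYY : Yᴴ * Y = B := by
    rw [hBdef, ← hSS]
    simp only [hYdef, Matrix.conjTranspose_mul, hSh, Matrix.mul_assoc]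
  have hCeq : Xᴴ * (A * A) * X = Yᴴ * A * Y := by
    have hSAS : S * A * S = A * A := by
      rw [← hSS]
      simp only [Matrix.mul_assoc]
    rw [← hSAS]
    simp only [hYdef, Matrix.conjTranspose_mul, hSh, Matrix.mul_assoc]
  set P : Matrix (Fin N) (Fin N) ℂ := Y * B⁻¹ * Yᴴ with hPdef
  have hmid : Yᴴ * (Y * (B⁻¹ * Yᴴ)) = Yᴴ := by
    rw [← Matrix.mul_assoc, hYY, ← Matrix.mul_assoc, Matrix.mul_nonsing_inv _ hBdet,
      Matrix.one_mul]
  have hPP : P * P = P := by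
    simp only [hPdef, Matrix.mul_assoc]
    rw [hmid]
  have hPH : Pᴴ = P := by
    have hBinv : (B⁻¹)ᴴ = B⁻¹ := by
      rw [Matrix.conjTranspose_nonsing_inv, hBpd.1.eq]
    simp only [hPdef, Matrix.conjTranspose_mul, Matrix.conjTranspose_conjTranspose, hBinv,
      Matrix.mul_assoc]
  set Q : Matrix (Fin N) (Fin N) ℂ := Uᴴ * P * U with hQdef
  have hQQ : Q * Q = Q := by
    have h1 : U * (Uᴴ * (P * U)) = P * U := by
      rw [← Matrix.mul_assoc, hU2, Matrix.one_mul]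
    have h2 : P * (P * U) = P * U := by rw [← Matrix.mul_assoc, hPP]
    simp only [hQdef, Matrix.mul_assoc]
    rw [h1, h2]
  have hQH : Qᴴ = Q := by
    simp only [hQdef, Matrix.conjTranspose_mul, Matrix.conjTranspose_conjTranspose, hPH,
      Matrix.mul_assoc]
  -- trace of Q is T
  have htrQ : Q.trace = (T : ℂ) := by
    have h1 : Q.trace = P.trace := by
      rw [hQdef, Matrix.mul_assoc Uᴴ P U, Matrix.trace_mul_comm Uᴴ (P * U),
        Matrix.mul_assoc P U Uᴴ, hU2, Matrix.mul_one]
    have h2 : P.trace = (T : ℂ) := by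
      rw [hPdef, Matrix.mul_assoc Y B⁻¹ Yᴴ, Matrix.trace_mul_comm Y (B⁻¹ * Yᴴ),
        Matrix.mul_assoc B⁻¹ Yᴴ Y, hYY, Matrix.nonsing_inv_mul _ hBdet, Matrix.trace_one]
      simp
    rw [h1, h2]
  -- the trace we need
  have htr : (B⁻¹ * (Xᴴ * (A * A) * X)).trace = (Q * D).trace := by
    rw [hCeq]
    rw [show B⁻¹ * (Yᴴ * A * Y) = (B⁻¹ * (Yᴴ * A)) * Y by simp only [Matrix.mul_assoc],
      Matrix.trace_mul_comm (B⁻¹ * (Yᴴ * A)) Y,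
      show Y * (B⁻¹ * (Yᴴ * A)) = (Y * B⁻¹ * Yᴴ) * A by simp only [Matrix.mul_assoc], ← hPdef,
      hA,
      show P * (U * D * Uᴴ) = (P * (U * D)) * Uᴴ by simp only [Matrix.mul_assoc],
      Matrix.trace_mul_comm (P * (U * D)) Uᴴ,
      show Uᴴ * (P * (U * D)) = (Uᴴ * P * U) * D by simp only [Matrix.mul_assoc], ← hQdef]
  have htrsum : (Q * D).trace = ∑ i, Q i i * (lam i : ℂ) := by
    simp [Matrix.trace, Matrix.diag, hD, Matrix.mul_diagonal]
  -- apply the combinatorial bound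
  set α : Fin N → ℝ := fun i => (Q i i).re with hα
  have hproj := fun i => aux_proj_diag hQH hQQ i
  have hsumα : ∑ i, α i = (T : ℝ) := by
    have := congrArg Complex.re htrQ
    simpa [Matrix.trace, Matrix.diag, Complex.re_sum] using this
  have hfinal : ((Xᴴ * A * X)⁻¹ * (Xᴴ * (A * A) * X)).trace.re = ∑ i, lam i * α i := by
    rw [← hBdef, htr, htrsum, Complex.re_sum]
    exact Finset.sum_congr rfl (fun i _ => by simp [Complex.mul_re, hα, mul_comm])
  rw [hfinal]
  exact aux_comb hT hTN lam hmono α (fun i => (hproj i).1) (fun i => (hproj i).2.1) hsumα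



theorem aux_eq (N T : ℕ) (hT : 0 < T) (hTN : T ≤ N)
    (ρ : ℝ) (hρ : 0 < ρ)
    (U : Matrix (Fin N) (Fin N) ℂ) (hU1 : Uᴴ * U = 1) (hU2 : U * Uᴴ = 1)
    (lam : Fin N → ℝ) (hpos : ∀ t, 0 < lam t)
    (A : Matrix (Fin N) (Fin N) ℂ)
    (hA : A = U * Matrix.diagonal (fun t => (lam t : ℂ)) * Uᴴ)
    (Xopt : Matrix (Fin N) (Fin T) ℂ)
    (hXopt : Xopt = fun i t => (Real.sqrt ρ : ℂ) * U i (Fin.castLE hTN t)) :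
    ((Xoptᴴ * A * Xopt)⁻¹ * (Xoptᴴ * (A * A) * Xopt)).trace
        = ((∑ t : Fin T, lam (Fin.castLE hTN t) : ℝ) : ℂ) := by
  classical
  set E : Matrix (Fin N) (Fin T) ℂ :=
    Matrix.of (fun i t => if i = Fin.castLE hTN t then (1 : ℂ) else 0) with hE
  have hXE : Xopt = (Real.sqrt ρ : ℂ) • (U * E) := by
    rw [hXopt]
    ext i t
    simp [hE, Matrix.mul_apply, Matrix.smul_apply, mul_ite, Finset.sum_ite_eq']
  have hEDE : ∀ d : Fin N → ℂ, Eᴴ * Matrix.diagonal d * E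
      = Matrix.diagonal (fun t => d (Fin.castLE hTN t)) := by
    intro d
    ext s t
    simp only [Matrix.mul_apply, Matrix.conjTranspose_apply, hE, Matrix.of_apply,
      Matrix.diagonal_apply, apply_ite (star : ℂ → ℂ), star_one, star_zero]
    simp only [ite_mul, one_mul, zero_mul, mul_ite, mul_one, mul_zero,
      Finset.sum_ite_eq, Finset.sum_ite_eq', Finset.mem_univ, if_true]
    by_cases h : s = t
    · subst h; simp
    · have h2 : ¬ (Fin.castLE hTN s = Fin.castLE hTN t) := fun hc =>
        h (Fin.castLE_injective hTN hc)
      simp [h, h2]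
      intro hts; exact absurd hts.symm h
  -- conjugation transport
  have hUAU : ∀ (M : Matrix (Fin N) (Fin N) ℂ) (d : Fin N → ℂ),
      M = U * Matrix.diagonal d * Uᴴ →
      Xoptᴴ * M * Xopt = (ρ : ℂ) • Matrix.diagonal (fun t => d (Fin.castLE hTN t)) := by
    intro M d hM
    have hsq : star (Real.sqrt ρ : ℂ) * (Real.sqrt ρ : ℂ) = (ρ : ℂ) := by
      rw [Complex.star_def, Complex.conj_ofReal, ← Complex.ofReal_mul, Real.mul_self_sqrt hρ.le]
    rw [hXE, hM]
    rw [Matrix.conjTranspose_smul, Matrix.conjTranspose_mul]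
    rw [Matrix.smul_mul, Matrix.smul_mul, Matrix.mul_smul, smul_smul, hsq]
    congr 1
    rw [show Eᴴ * Uᴴ * (U * Matrix.diagonal d * Uᴴ) * (U * E)
        = Eᴴ * ((Uᴴ * U) * Matrix.diagonal d * (Uᴴ * U)) * E by simp only [Matrix.mul_assoc],
      hU1, Matrix.one_mul, Matrix.mul_one, hEDE]
  have h1 : Xoptᴴ * A * Xopt
      = (ρ : ℂ) • Matrix.diagonal (fun t => (lam (Fin.castLE hTN t) : ℂ)) :=
    hUAU A _ hA
  have h2 : Xoptᴴ * (A * A) * Xopt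
      = (ρ : ℂ) • Matrix.diagonal (fun t => ((lam (Fin.castLE hTN t) : ℂ) *
          (lam (Fin.castLE hTN t) : ℂ))) := by
    refine hUAU (A * A) (fun i => (lam i : ℂ) * (lam i : ℂ)) ?_
    rw [hA]
    rw [show U * Matrix.diagonal (fun t => (lam t : ℂ)) * Uᴴ *
        (U * Matrix.diagonal (fun t => (lam t : ℂ)) * Uᴴ)
        = U * (Matrix.diagonal (fun t => (lam t : ℂ)) * (Uᴴ * U) *
            Matrix.diagonal (fun t => (lam t : ℂ))) * Uᴴ by simp only [Matrix.mul_assoc],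
      hU1, Matrix.mul_one, Matrix.diagonal_mul_diagonal]
  rw [h1, h2]
  rw [show ∀ (v : Fin T → ℂ), (ρ : ℂ) • Matrix.diagonal v = Matrix.diagonal (fun t => (ρ:ℂ) * v t)
      from fun v => by rw [← Matrix.diagonal_smul]; rfl]
  rw [show ∀ (v : Fin T → ℂ), (ρ : ℂ) • Matrix.diagonal v = Matrix.diagonal (fun t => (ρ:ℂ) * v t)
      from fun v => by rw [← Matrix.diagonal_smul]; rfl]
  have hne : ∀ t : Fin T, ((ρ : ℂ) * (lam (Fin.castLE hTN t) : ℂ)) ≠ 0 := fun t =>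
    mul_ne_zero (Complex.ofReal_ne_zero.mpr hρ.ne')
      (Complex.ofReal_ne_zero.mpr (hpos _).ne')
  have hinv : (Matrix.diagonal (fun t => (ρ:ℂ) * (lam (Fin.castLE hTN t) : ℂ)))⁻¹
      = Matrix.diagonal (fun t => ((ρ:ℂ) * (lam (Fin.castLE hTN t) : ℂ))⁻¹) := by
    refine Matrix.inv_eq_right_inv ?_
    rw [Matrix.diagonal_mul_diagonal, ← Matrix.diagonal_one]
    exact congrArg _ (funext fun t => mul_inv_cancel₀ (hne t))
  rw [hinv, Matrix.diagonal_mul_diagonal, Matrix.trace_diagonal]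
  push_cast
  refine Finset.sum_congr rfl (fun t _ => ?_)
  have h1' : (lam (Fin.castLE hTN t) : ℂ) ≠ 0 := Complex.ofReal_ne_zero.mpr (hpos _).ne'
  have h2' : (ρ : ℂ) ≠ 0 := Complex.ofReal_ne_zero.mpr hρ.ne'
  field_simp


/-- high-SNR training objective bound: for Hermitian positive
definite `A = U diag(λ) Uᴴ` with `λ_1 ≥ ⋯ ≥ λ_N > 0` and any `X` with
`Xᴴ X = ρ I_T`, the matrix `Xᴴ A X` is positive definite and
`tr((Xᴴ A X)⁻¹ Xᴴ A² X) ≤ Σ_{t=1}^T λ_t`, with equality for `X = √ρ U_{[1:T]}`. -/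
theorem stmt_17 (N T : ℕ) (hT : 0 < T) (hTN : T ≤ N)
    (ρ : ℝ) (hρ : 0 < ρ)
    (U : Matrix (Fin N) (Fin N) ℂ) (hU1 : Uᴴ * U = 1) (hU2 : U * Uᴴ = 1)
    (lam : Fin N → ℝ) (hpos : ∀ t, 0 < lam t) (hmono : Antitone lam)
    (A : Matrix (Fin N) (Fin N) ℂ)
    (hA : A = U * Matrix.diagonal (fun t => (lam t : ℂ)) * Uᴴ)
    (Xopt : Matrix (Fin N) (Fin T) ℂ)
    (hXopt : Xopt = fun i t => (Real.sqrt ρ : ℂ) * U i (Fin.castLE hTN t)) :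
    (∀ X : Matrix (Fin N) (Fin T) ℂ,
        Xᴴ * X = (ρ : ℂ) • (1 : Matrix (Fin T) (Fin T) ℂ) →
        (Xᴴ * A * X).PosDef
        ∧ ((Xᴴ * A * X)⁻¹ * (Xᴴ * (A * A) * X)).trace.re
            ≤ ∑ t : Fin T, lam (Fin.castLE hTN t))
    ∧ ((Xoptᴴ * A * Xopt)⁻¹ * (Xoptᴴ * (A * A) * Xopt)).trace
        = ((∑ t : Fin T, lam (Fin.castLE hTN t) : ℝ) : ℂ) := by
  exact ⟨fun X hX => aux_ineq N T hT hTN ρ hρ U hU1 hU2 lam hpos hmono A hA X hX,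
    aux_eq N T hT hTN ρ hρ U hU1 hU2 lam hpos A hA Xopt hXopt⟩
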